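/- There exist universal constants c₁, c₂ > 0 such that for every p ∈ (0,1), every δ ∈ (0,1), and every integer n ≥ c₁ log(2/δ)/(p(1−p)): if y_1,…,y_n are i.i.d. Bernoulli(p) with sample mean ȳ_n = (1/n)Σ_{i=1}^n y_i, then P(KL(p ‖ ȳ_n) ≤ c₂ log(2/δ)/n) ≥ 1 − δ. -/

import Mathlib

open MeasureTheory ProbabilityTheory
open scoped ENNReal

universe u

/-- Bernoulli distribution on `ℝ` with mean `p`. -/
noncomputable def bern (p : ℝ) : Measure ℝ :=
  ENNReal.ofReal p • Measure.dirac 1 + ENNReal.ofReal (1 - p) • Measure.dirac 0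

/-- Real-valued Bernoulli KL divergence (with `0 * log 0 = 0`). -/
noncomputable def klBer (q p : ℝ) : ℝ :=
  q * Real.log (q / p) + (1 - q) * Real.log ((1 - q) / (1 - p))

/-- Extended Bernoulli KL divergence on `[0,1]`, with `KL(q ‖ p) = ∞` when `p ∈ {0,1}`, `q ≠ p`. -/
noncomputable def klBerE (q p : ℝ) : ℝ≥0∞ :=
  if (p = 0 ∧ q ≠ 0) ∨ (p = 1 ∧ q ≠ 1) then ⊤ else ENNReal.ofReal (klBer q p)

open Real

lemma bern_prob {p : ℝ} (h0 : 0 ≤ p) (h1 : p ≤ 1) : IsProbabilityMeasure (bern p) := by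
  constructor
  simp [bern, ← ENNReal.ofReal_add h0 (by linarith : (0:ℝ) ≤ 1 - p)]

lemma integrable_bern {p : ℝ} (f : ℝ → ℝ) (hf : Measurable f) :
    Integrable f (bern p) := by
  have h1 : Integrable f (Measure.dirac (1:ℝ)) :=
    (integrable_const (f 1)).congr (ae_eq_dirac f).symm
  have h0 : Integrable f (Measure.dirac (0:ℝ)) :=
    (integrable_const (f 0)).congr (ae_eq_dirac f).symm
  exact (h1.smul_measure ENNReal.ofReal_ne_top).add_measure
    (h0.smul_measure ENNReal.ofReal_ne_top)

lemma integral_bern {p : ℝ} (h0 : 0 ≤ p) (h1 : p ≤ 1) (f : ℝ → ℝ) (hf : Measurable f) :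
    ∫ u, f u ∂(bern p) = p * f 1 + (1 - p) * f 0 := by
  have h1' : Integrable f (ENNReal.ofReal p • Measure.dirac (1:ℝ)) :=
    (((integrable_const (f 1)).congr (ae_eq_dirac f).symm).smul_measure ENNReal.ofReal_ne_top)
  have h0' : Integrable f (ENNReal.ofReal (1-p) • Measure.dirac (0:ℝ)) :=
    (((integrable_const (f 0)).congr (ae_eq_dirac f).symm).smul_measure ENNReal.ofReal_ne_top)
  rw [bern, integral_add_measure h1' h0', integral_smul_measure, integral_smul_measure,
    integral_dirac, integral_dirac, ENNReal.toReal_ofReal h0,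
    ENNReal.toReal_ofReal (by linarith : (0:ℝ) ≤ 1 - p)]
  simp [smul_eq_mul]

lemma integral_exp_bern {p : ℝ} (h0 : 0 ≤ p) (h1 : p ≤ 1) (t : ℝ) :
    ∫ u, exp (t * u) ∂(bern p) = (1 - p) + p * exp t := by
  rw [integral_bern h0 h1 _ (by fun_prop)]
  simp [Real.exp_zero]
  ring

lemma integrable_exp_sum_pi {p : ℝ} (h0 : 0 ≤ p) (h1 : p ≤ 1) (n : ℕ) (t : ℝ) :
    Integrable (fun x : Fin n → ℝ => exp (t * ∑ i, x i))
      (Measure.pi fun _ : Fin n => bern p) := by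
  letI : MeasureSpace ℝ := ⟨bern p⟩
  haveI : IsProbabilityMeasure (volume : Measure ℝ) := bern_prob h0 h1
  have hv : (Measure.pi fun _ : Fin n => bern p) = (volume : Measure (Fin n → ℝ)) :=
    (volume_pi).symm
  rw [hv]
  have : (fun x : Fin n → ℝ => exp (t * ∑ i, x i)) =
      fun x : Fin n → ℝ => ∏ i, exp (t * x i) := by
    funext x
    rw [← Real.exp_sum, Finset.mul_sum]
  rw [this]
  exact Integrable.fintype_prod (f := fun _ u => exp (t * u))
    (fun i => integrable_bern _ (by fun_prop))

lemma integral_exp_sum_pi {p : ℝ} (h0 : 0 ≤ p) (h1 : p ≤ 1) (n : ℕ) (t : ℝ) :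
    ∫ x : Fin n → ℝ, exp (t * ∑ i, x i) ∂(Measure.pi fun _ : Fin n => bern p)
      = ((1 - p) + p * exp t) ^ n := by
  letI : MeasureSpace ℝ := ⟨bern p⟩
  haveI : IsProbabilityMeasure (volume : Measure ℝ) := bern_prob h0 h1
  have hv : (Measure.pi fun _ : Fin n => bern p) = (volume : Measure (Fin n → ℝ)) :=
    (volume_pi).symm
  rw [hv]
  have h2 : (fun x : Fin n → ℝ => exp (t * ∑ i, x i)) =
      fun x : Fin n → ℝ => ∏ i, exp (t * x i) := by
    funext x
    rw [← Real.exp_sum, Finset.mul_sum]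
  rw [h2]
  rw [← hv, MeasureTheory.integral_fintype_prod_eq_pow (fun u => exp (t * u))]
  rw [integral_exp_bern h0 h1 t]
  simp

lemma chernoff_core {p q : ℝ} (hp : 0 < p) (hp1 : p < 1) (hq : 0 < q) (hq1 : q < 1) (n : ℕ) :
    exp (-(log (q*(1-p)/(p*(1-q)))) * ((n:ℝ)*q))
      * ((1 - p) + p * exp (log (q*(1-p)/(p*(1-q))))) ^ n
      = exp (-((n:ℝ) * klBer q p)) := by
  have h1q : (0:ℝ) < 1 - q := by linarith
  have h1p : (0:ℝ) < 1 - p := by linarith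
  set t := log (q*(1-p)/(p*(1-q))) with ht
  have harg : (0:ℝ) < q*(1-p)/(p*(1-q)) := by positivity
  have hexp : exp t = q*(1-p)/(p*(1-q)) := exp_log harg
  have hkey : (1 - p) + p * exp t = (1-p)/(1-q) := by
    rw [hexp]; field_simp; ring
  have hper : exp (-t * q) * ((1-p)/(1-q)) = exp (-(klBer q p)) := by
    rw [show (1-p)/(1-q) = exp (log (1-p) - log (1-q)) by
      rw [← Real.log_div h1p.ne' h1q.ne', exp_log (by positivity)]]
    rw [← Real.exp_add]
    congr 1
    have htt : t = log q + log (1-p) - (log p + log (1-q)) := by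
      rw [ht, Real.log_div (by positivity) (by positivity),
        Real.log_mul hq.ne' h1p.ne', Real.log_mul hp.ne' h1q.ne']
    have hK : klBer q p = q * (log q - log p) + (1-q) * (log (1-q) - log (1-p)) := by
      rw [klBer, Real.log_div hq.ne' hp.ne', Real.log_div h1q.ne' h1p.ne']
    rw [htt, hK]; ring
  rw [hkey]
  have h1 : exp (-t * ((n:ℝ)*q)) = (exp (-t * q)) ^ n := by
    rw [← Real.exp_nat_mul]; ring_nf
  rw [h1, ← mul_pow, hper, ← Real.exp_nat_mul]
  ring_nf

lemma tail_upper {p q : ℝ} (hp : 0 < p) (hp1 : p < 1) (hq : 0 < q) (hq1 : q < 1)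
    (hpq : p ≤ q) (n : ℕ) :
    ((Measure.pi fun _ : Fin n => bern p) {x | (n:ℝ)*q ≤ ∑ i, x i}).toReal
      ≤ exp (-((n:ℝ) * klBer q p)) := by
  haveI : IsProbabilityMeasure (bern p) := bern_prob hp.le hp1.le
  set t := log (q*(1-p)/(p*(1-q))) with ht
  have h1q : (0:ℝ) < 1 - q := by linarith
  have ht0 : 0 ≤ t := by
    apply Real.log_nonneg
    rw [le_div_iff₀ (by positivity)]
    nlinarith
  have hb := ProbabilityTheory.measure_ge_le_exp_mul_mgf (X := fun x : Fin n → ℝ => ∑ i, x i)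
    (μ := Measure.pi fun _ : Fin n => bern p) ((n:ℝ)*q) ht0
    (integrable_exp_sum_pi hp.le hp1.le n t)
  have hm : mgf (fun x : Fin n → ℝ => ∑ i, x i) (Measure.pi fun _ : Fin n => bern p) t
      = ((1 - p) + p * exp t) ^ n := integral_exp_sum_pi hp.le hp1.le n t
  rw [hm] at hb
  exact hb.trans_eq (chernoff_core hp hp1 hq hq1 n)

lemma tail_lower {p q : ℝ} (hp : 0 < p) (hp1 : p < 1) (hq : 0 < q) (hq1 : q < 1)
    (hpq : q ≤ p) (n : ℕ) :
    ((Measure.pi fun _ : Fin n => bern p) {x | ∑ i, x i ≤ (n:ℝ)*q}).toReal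
      ≤ exp (-((n:ℝ) * klBer q p)) := by
  haveI : IsProbabilityMeasure (bern p) := bern_prob hp.le hp1.le
  set t := log (q*(1-p)/(p*(1-q))) with ht
  have h1q : (0:ℝ) < 1 - q := by linarith
  have ht0 : t ≤ 0 := by
    have h1p : (0:ℝ) < 1 - p := by linarith
    apply Real.log_nonpos (by positivity)
    rw [div_le_one (by positivity)]
    nlinarith
  have hb := ProbabilityTheory.measure_le_le_exp_mul_mgf (X := fun x : Fin n → ℝ => ∑ i, x i)
    (μ := Measure.pi fun _ : Fin n => bern p) ((n:ℝ)*q) ht0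
    (integrable_exp_sum_pi hp.le hp1.le n t)
  have hm : mgf (fun x : Fin n → ℝ => ∑ i, x i) (Measure.pi fun _ : Fin n => bern p) t
      = ((1 - p) + p * exp t) ^ n := integral_exp_sum_pi hp.le hp1.le n t
  rw [hm] at hb
  exact hb.trans_eq (chernoff_core hp hp1 hq hq1 n)

lemma klBer_self {p : ℝ} : klBer p p = 0 := by
  have h : ∀ a : ℝ, a * log (a/a) = 0 := by
    intro a
    rcases eq_or_ne a 0 with h|h
    · simp [h]
    · simp [div_self h]
  have := h (1-p)
  simp only [klBer]
  rw [h p, this]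
  ring

lemma klBer_flip (q p : ℝ) : klBer q p = klBer (1-q) (1-p) := by
  simp only [klBer]
  ring_nf

lemma klBer_le_chisq {p q : ℝ} (hp : 0 < p) (hp1 : p < 1) (hq : 0 < q) (hq1 : q < 1) :
    klBer p q ≤ (p - q)^2 / (q * (1-q)) := by
  have h1q : (0:ℝ) < 1 - q := by linarith
  have h1p : (0:ℝ) < 1 - p := by linarith
  have l1 : log (p / q) ≤ p/q - 1 := Real.log_le_sub_one_of_pos (by positivity)
  have l2 : log ((1-p) / (1-q)) ≤ (1-p)/(1-q) - 1 := Real.log_le_sub_one_of_pos (by positivity)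
  have : klBer p q ≤ p * (p/q - 1) + (1-p) * ((1-p)/(1-q) - 1) :=
    add_le_add (mul_le_mul_of_nonneg_left l1 hp.le) (mul_le_mul_of_nonneg_left l2 h1p.le)
  refine this.trans (le_of_eq ?_)
  field_simp
  ring

lemma log_diff_ge {a b : ℝ} (ha : 0 < a) (hb : 0 < b) : 1 - a/b ≤ log b - log a := by
  have := Real.log_le_sub_one_of_pos (show (0:ℝ) < a/b by positivity)
  rw [Real.log_div ha.ne' hb.ne'] at this
  linarith

lemma klBer_lower {p u : ℝ} (hp : 0 < p) (hp1 : p < 1) (hu : 0 ≤ u)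
    (hu4 : u ≤ p*(1-p)/4) :
    u^2/(3*(p*(1-p))) ≤ klBer (p+u) p := by
  have h1p : (0:ℝ) < 1 - p := by linarith
  set c := p*(1-p) with hc
  have hcpos : 0 < c := by positivity
  have hcp : c ≤ p := by nlinarith
  have hc1p : c ≤ 1 - p := by nlinarith
  set g : ℝ → ℝ := fun u =>
    (p+u)*(log (p+u) - log p) + (1-p-u)*(log (1-p-u) - log (1-p)) - u^2/(3*c) with hg
  have hderiv : ∀ x ∈ Set.Icc (0:ℝ) (c/4), HasDerivAt g
      ((log (p+x) - log p) - (log (1-p-x) - log (1-p)) - 2*x/(3*c)) x := by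
    intro x hx
    obtain ⟨hx0, hx4⟩ := hx
    have hpx : 0 < p + x := by linarith
    have h1px : 0 < 1 - p - x := by nlinarith
    have d1 : HasDerivAt (fun u : ℝ => p + u) 1 x := by
      simpa using (hasDerivAt_id x).const_add p
    have d2 : HasDerivAt (fun u : ℝ => log (p + u)) (1/(p+x)) x := by
      simpa using d1.log hpx.ne'
    have d3 : HasDerivAt (fun u : ℝ => (p+u)*(log (p+u) - log p))
        (1*(log (p+x) - log p) + (p+x)*(1/(p+x))) x :=
      d1.mul (d2.sub_const (log p))
    have d4 : HasDerivAt (fun u : ℝ => 1 - p - u) (-1) x := by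
      simpa using ((hasDerivAt_id x).const_sub (1-p))
    have d5 : HasDerivAt (fun u : ℝ => log (1 - p - u)) (-1/(1-p-x)) x := by
      simpa using d4.log h1px.ne'
    have d6 : HasDerivAt (fun u : ℝ => (1-p-u)*(log (1-p-u) - log (1-p)))
        ((-1)*(log (1-p-x) - log (1-p)) + (1-p-x)*(-1/(1-p-x))) x :=
      d4.mul (d5.sub_const (log (1-p)))
    have d7 : HasDerivAt (fun u : ℝ => u^2/(3*c)) (2*x/(3*c)) x := by
      have := (hasDerivAt_pow 2 x).div_const (3*c)
      simpa [mul_comm, mul_assoc, mul_div_assoc] using this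
    have := (d3.add d6).sub d7
    refine this.congr_deriv ?_
    rw [mul_one_div_cancel hpx.ne', neg_div, mul_neg, mul_one_div_cancel h1px.ne']
    ring
  have hmono : MonotoneOn g (Set.Icc (0:ℝ) (c/4)) := by
    apply monotoneOn_of_deriv_nonneg (convex_Icc _ _)
    · intro x hx
      exact (hderiv x hx).continuousAt.continuousWithinAt
    · intro x hx
      rw [interior_Icc] at hx
      exact ((hderiv x (Set.mem_Icc_of_Ioo hx)).differentiableAt).differentiableWithinAt
    · intro x hx
      rw [interior_Icc] at hx
      obtain ⟨hx0, hx4⟩ := hx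
      rw [(hderiv x (Set.mem_Icc_of_Ioo ⟨hx0, hx4⟩)).deriv]
      have hpx : 0 < p + x := by linarith
      have h1px : 0 < 1 - p - x := by nlinarith
      have l1 : 1 - p/(p+x) ≤ log (p+x) - log p := log_diff_ge hp hpx
      have l2 : 1 - (1-p-x)/(1-p) ≤ log (1-p) - log (1-p-x) := log_diff_ge h1px h1p
      have e0 : 1 - p/(p+x) = x/(p+x) := by field_simp; ring
      have e0' : 1 - (1-p-x)/(1-p) = x/(1-p) := by field_simp; ring
      have hpx5 : p + x ≤ 5*p/4 := by nlinarith
      have e1 : 4*x/(5*p) ≤ x/(p+x) := by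
        rw [div_le_div_iff₀ (by positivity) hpx]
        nlinarith
      have e2 : 2*x/(3*c) ≤ 4*x/(5*p) + x/(1-p) := by
        rw [div_add_div _ _ (by positivity : (5*p) ≠ 0) h1p.ne', div_le_div_iff₀ (by positivity) (by positivity)]
        rw [hc]
        nlinarith [mul_nonneg (mul_nonneg hx0.le hp.le) h1p.le]
      rw [e0] at l1
      rw [e0'] at l2
      linarith
  have h0mem : (0:ℝ) ∈ Set.Icc (0:ℝ) (c/4) := by constructor <;> [rfl; positivity]
  have humem : u ∈ Set.Icc (0:ℝ) (c/4) := ⟨hu, by rw [hc]; linarith⟩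
  have hg0 : g 0 = 0 := by simp [hg]
  have := hmono h0mem humem hu
  rw [hg0] at this
  have hpu : 0 < p + u := by linarith
  have h1pu : 0 < 1 - p - u := by nlinarith
  have hkl : klBer (p+u) p =
      (p+u)*(log (p+u) - log p) + (1-p-u)*(log (1-p-u) - log (1-p)) := by
    rw [klBer, Real.log_div hpu.ne' hp.ne',
      show (1:ℝ) - (p+u) = 1-p-u by ring, Real.log_div h1pu.ne' h1p.ne']
  simp only [hg] at this
  linarith [this, hkl.ge]

lemma klBer_lower' {p u : ℝ} (hp : 0 < p) (hp1 : p < 1) (hu : 0 ≤ u)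
    (hu4 : u ≤ p*(1-p)/4) :
    u^2/(3*(p*(1-p))) ≤ klBer (p-u) p := by
  have := klBer_lower (p := 1-p) (u := u) (by linarith) (by linarith) hu (by nlinarith)
  rw [klBer_flip (p-u) p, show (1:ℝ) - (p-u) = (1-p) + u by ring]
  calc u^2/(3*(p*(1-p))) = u^2/(3*((1-p)*(1-(1-p)))) := by ring_nf
    _ ≤ _ := this

set_option maxHeartbeats 2000000 in
/-- reversed KL-based Bernoulli concentration bound, with universal constants. -/
theorem stmt14 :
    ∃ c₁ c₂ : ℝ, 0 < c₁ ∧ 0 < c₂ ∧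
      ∀ (p δ : ℝ), p ∈ Set.Ioo (0 : ℝ) 1 → δ ∈ Set.Ioo (0 : ℝ) 1 →
      ∀ n : ℕ, c₁ * Real.log (2 / δ) / (p * (1 - p)) ≤ (n : ℝ) →
      ∀ (Ω : Type u) (_ : MeasurableSpace Ω) (P : Measure Ω), IsProbabilityMeasure P →
      ∀ y : Fin n → Ω → ℝ,
        Measure.map (fun ω => fun i => y i ω) P = Measure.pi (fun _ : Fin n => bern p) →
        ENNReal.ofReal (1 - δ) ≤
          P {ω | klBerE p ((∑ i, y i ω) / n) ≤ ENNReal.ofReal (c₂ * Real.log (2 / δ) / n)} := by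
  refine ⟨48, 6, by norm_num, by norm_num, ?_⟩
  rintro p δ ⟨hp, hp1⟩ ⟨hδ, hδ1⟩ n hn Ω mΩ P hP y hmap
  have h1p : (0:ℝ) < 1 - p := by linarith
  set L := Real.log (2/δ) with hL
  have hLpos : 0 < L := Real.log_pos (by rw [lt_div_iff₀ hδ]; linarith)
  have hnpos : (0:ℝ) < n := lt_of_lt_of_le (by positivity) hn
  have hn0 : (n:ℝ) ≠ 0 := hnpos.ne'
  have hLn : L/n ≤ p*(1-p)/48 := by
    rw [div_le_div_iff₀ hnpos (by norm_num)]
    rw [div_le_iff₀ (by positivity)] at hn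
    nlinarith
  obtain ⟨ε, hεpos, hεsq⟩ : ∃ ε : ℝ, 0 < ε ∧ ε^2 = 3*(p*(1-p))*(L/n) :=
    ⟨Real.sqrt (3*(p*(1-p))*(L/n)), Real.sqrt_pos.mpr (by positivity),
      Real.sq_sqrt (by positivity)⟩
  have hε4 : ε ≤ p*(1-p)/4 := by
    have hsq : ε^2 ≤ (p*(1-p)/4)^2 := by
      nlinarith [mul_le_mul_of_nonneg_left hLn (by positivity : (0:ℝ) ≤ 3*(p*(1-p)))]
    by_contra hcon
    push_neg at hcon
    have hB : 0 < p*(1-p)/4 := by positivity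
    nlinarith [hsq, mul_pos (show (0:ℝ) < ε - p*(1-p)/4 by linarith)
      (show (0:ℝ) < ε + p*(1-p)/4 by linarith)]
  have hεp : ε ≤ p/4 := hε4.trans (by nlinarith)
  have hε1p : ε ≤ (1-p)/4 := hε4.trans (by nlinarith)
  set qU := p + ε with hqU
  set qL := p - ε with hqL
  have hqU1 : qU < 1 := by rw [hqU]; linarith
  have hqU0 : 0 < qU := by rw [hqU]; linarith
  have hqL0 : 0 < qL := by rw [hqL]; linarith
  have hqL1 : qL < 1 := by rw [hqL]; linarith
  set mn := Measure.pi fun _ : Fin n => bern p with hmn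
  haveI hbp : IsProbabilityMeasure (bern p) := bern_prob hp.le (by linarith)
  haveI : IsProbabilityMeasure mn := by rw [hmn]; infer_instance
  have h2 : ε^2/(3*(p*(1-p))) = L/(n:ℝ) := by rw [hεsq]; field_simp
  have hklU : L ≤ (n:ℝ) * klBer qU p := by
    have h := klBer_lower hp hp1 hεpos.le hε4
    rw [h2] at h
    rw [div_le_iff₀ hnpos] at h
    rw [hqU]; linarith
  have hklL : L ≤ (n:ℝ) * klBer qL p := by
    have h := klBer_lower' hp hp1 hεpos.le hε4
    rw [h2] at h
    rw [div_le_iff₀ hnpos] at h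
    rw [hqL]; linarith
  have hδ2 : Real.exp (-L) = δ/2 := by
    rw [hL, Real.exp_neg, Real.exp_log (by positivity)]
    field_simp
  -- tail measures
  have hU : (mn {x : Fin n → ℝ | (n:ℝ)*qU ≤ ∑ i, x i}).toReal ≤ δ/2 := by
    refine (tail_upper hp hp1 hqU0 hqU1 (by rw [hqU]; linarith) n).trans ?_
    rw [← hδ2]
    exact Real.exp_le_exp.mpr (by linarith)
  have hLo : (mn {x : Fin n → ℝ | ∑ i, x i ≤ (n:ℝ)*qL}).toReal ≤ δ/2 := by
    refine (tail_lower hp hp1 hqL0 hqL1 (by rw [hqL]; linarith) n).trans ?_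
    rw [← hδ2]
    exact Real.exp_le_exp.mpr (by linarith)
  have hUe : mn {x : Fin n → ℝ | (n:ℝ)*qU ≤ ∑ i, x i} ≤ ENNReal.ofReal (δ/2) :=
    (ENNReal.le_ofReal_iff_toReal_le (measure_ne_top _ _) (by positivity)).mpr hU
  have hLoe : mn {x : Fin n → ℝ | ∑ i, x i ≤ (n:ℝ)*qL} ≤ ENNReal.ofReal (δ/2) :=
    (ENNReal.le_ofReal_iff_toReal_le (measure_ne_top _ _) (by positivity)).mpr hLo
  -- the good set
  have hSmeas : Measurable (fun x : Fin n → ℝ => ∑ i, x i) := by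
    exact Finset.measurable_sum _ (fun i _ => measurable_pi_apply i)
  set A : Set (Fin n → ℝ) := {x | (n:ℝ)*qL < ∑ i, x i ∧ ∑ i, x i < (n:ℝ)*qU} with hA
  have hAmeas : MeasurableSet A := by
    have : A = (fun x : Fin n → ℝ => ∑ i, x i) ⁻¹' (Set.Ioo ((n:ℝ)*qL) ((n:ℝ)*qU)) := rfl
    rw [this]
    exact hSmeas measurableSet_Ioo
  have hcompl : Aᶜ ⊆ {x : Fin n → ℝ | ∑ i, x i ≤ (n:ℝ)*qL} ∪
      {x : Fin n → ℝ | (n:ℝ)*qU ≤ ∑ i, x i} := by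
    intro x hx
    simp only [hA, Set.mem_compl_iff, Set.mem_setOf_eq, not_and_or, not_lt] at hx
    rcases hx with h | h
    · exact Or.inl h
    · exact Or.inr h
  have hAc : mn Aᶜ ≤ ENNReal.ofReal δ := by
    refine (measure_mono hcompl).trans ((measure_union_le _ _).trans ?_)
    calc _ ≤ ENNReal.ofReal (δ/2) + ENNReal.ofReal (δ/2) := add_le_add hLoe hUe
      _ = ENNReal.ofReal δ := by
        rw [← ENNReal.ofReal_add (by positivity) (by positivity)]; norm_num
  have hAge : ENNReal.ofReal (1 - δ) ≤ mn A := by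
    have h1 : mn Aᶜ = 1 - mn A := prob_compl_eq_one_sub hAmeas
    have h2 : mn A = 1 - mn Aᶜ := by
      rw [h1, ENNReal.sub_sub_cancel ENNReal.one_ne_top prob_le_one]
    rw [h2]
    calc ENNReal.ofReal (1 - δ) = 1 - ENNReal.ofReal δ := by
          rw [ENNReal.ofReal_sub 1 hδ.le, ENNReal.ofReal_one]
      _ ≤ 1 - mn Aᶜ := tsub_le_tsub_left hAc 1
  -- transport to Ω
  set Y : Ω → (Fin n → ℝ) := fun ω => fun i => y i ω with hY
  have hYae : AEMeasurable Y P := by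
    by_contra hcon
    rw [Measure.map_of_not_aemeasurable hcon] at hmap
    have h1 : (0 : Measure (Fin n → ℝ)) Set.univ = mn Set.univ := by rw [hmap]
    simp [measure_univ] at h1
  have hmapA : P (Y ⁻¹' A) = mn A := by
    rw [← Measure.map_apply_of_aemeasurable hYae hAmeas, hmap]
  have hsub : Y ⁻¹' A ⊆
      {ω | klBerE p ((∑ i, y i ω) / n) ≤ ENNReal.ofReal (6 * L / n)} := by
    intro ω hω
    simp only [Set.mem_preimage, hA, Set.mem_setOf_eq] at hω
    obtain ⟨hω1, hω2⟩ := hω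
    have hsum : ∑ i, Y ω i = ∑ i, y i ω := rfl
    rw [hsum] at hω1 hω2
    set m := (∑ i, y i ω) / (n:ℝ) with hm
    have hmL : qL < m := by rw [hm, lt_div_iff₀ hnpos]; linarith
    have hmU : m < qU := by rw [hm, div_lt_iff₀ hnpos]; linarith
    have hm0 : 0 < m := lt_trans hqL0 hmL
    have hm1 : m < 1 := lt_trans hmU hqU1
    simp only [Set.mem_setOf_eq]
    rw [klBerE, if_neg (by push_neg; constructor <;> intro h <;> [exact absurd h hm0.ne'; exact absurd h hm1.ne])]
    apply ENNReal.ofReal_le_ofReal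
    have hq34 : 3*p/4 ≤ m := by rw [hqL] at hmL; linarith
    have h1q34 : 3*(1-p)/4 ≤ 1 - m := by rw [hqU] at hmU; linarith
    have hchisq := klBer_le_chisq hp hp1 hm0 hm1
    have hpm : (p - m)^2 ≤ ε^2 := by
      rw [hqL] at hmL; rw [hqU] at hmU
      nlinarith [mul_pos (show 0 < ε - (p-m) by linarith) (show 0 < ε + (p-m) by linarith)]
    have hden : 9*(p*(1-p))/16 ≤ m*(1-m) := by
      nlinarith [mul_le_mul hq34 h1q34 (by positivity) hm0.le]
    calc klBer p m ≤ (p-m)^2/(m*(1-m)) := hchisq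
      _ ≤ ε^2/(9*(p*(1-p))/16) :=
          div_le_div₀ (sq_nonneg ε) hpm (by positivity) hden
      _ = 16*L/(3*(n:ℝ)) := by rw [hεsq]; field_simp; ring
      _ ≤ 6 * L / n := by
          rw [div_le_div_iff₀ (by positivity) hnpos]
          nlinarith
  calc ENNReal.ofReal (1 - δ) ≤ mn A := hAge
    _ = P (Y ⁻¹' A) := hmapA.symm
    _ ≤ _ := measure_mono hsub
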